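/- Let k be a field of characteristic different from 2. Then the quotient ring k[x,y]/(x²+y², y²(y−x)) is a 6-dimensional k-vector space, with basis given by the images of the monomials 1, x, y, x², xy, x²y. (This computes the sl₂ homology of the Soergel bimodule B with respect to the Cautis differential, the building block for the Jones homology of (2,n) torus links.) -/

import Mathlib

open MvPolynomial

set_option synthInstance.maxHeartbeats 1000000
set_option maxHeartbeats 1000000

noncomputable section Stmt19Aux

variable {k : Type*} [Field k]

private def dd (a b : ℕ) : Fin 2 →₀ ℕ := Finsupp.single 0 a + Finsupp.single 1 b

private lemma dd_apply0 (a b : ℕ) : dd a b 0 = a := by simp [dd]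
private lemma dd_apply1 (a b : ℕ) : dd a b 1 = b := by simp [dd]

private lemma dd_eq_iff {a b a' b' : ℕ} : dd a b = dd a' b' ↔ a = a' ∧ b = b' := by
  constructor
  · intro h
    exact ⟨by simpa [dd_apply0] using DFunLike.congr_fun h 0,
           by simpa [dd_apply1] using DFunLike.congr_fun h 1⟩
  · rintro ⟨rfl, rfl⟩; rfl

private lemma dd_le_iff {s t a b : ℕ} : dd s t ≤ dd a b ↔ s ≤ a ∧ t ≤ b := by
  rw [Finsupp.le_def]
  constructor
  · intro h
    exact ⟨by simpa [dd_apply0] using h 0, by simpa [dd_apply1] using h 1⟩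
  · rintro ⟨h1, h2⟩ i
    fin_cases i <;> simpa [dd_apply0, dd_apply1]

private lemma dd_sub {s t a b : ℕ} : dd a b - dd s t = dd (a - s) (b - t) := by
  ext i
  fin_cases i <;> simp [Finsupp.tsub_apply, dd_apply0, dd_apply1]

private lemma Xst_eq_dd (s t : ℕ) :
    (X 0 : MvPolynomial (Fin 2) k) ^ s * X 1 ^ t = monomial (dd s t) 1 := by
  rw [X_pow_eq_monomial, X_pow_eq_monomial, monomial_mul, one_mul]; rfl

private lemma mono_decomp (u : Fin 2 →₀ ℕ) : u = dd (u 0) (u 1) := by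
  ext i; fin_cases i <;> simp [dd, Finsupp.single_apply]

private lemma coeff_mul_dd (u : MvPolynomial (Fin 2) k) (s t a b : ℕ) :
    coeff (dd a b) (u * monomial (dd s t) 1) =
      if s ≤ a ∧ t ≤ b then coeff (dd (a - s) (b - t)) u else 0 := by
  rw [coeff_mul_monomial']
  simp only [mul_one, dd_le_iff, dd_sub]

/-- The ideal `(x² + y², y²(y - x))`. -/
private def Iid (k : Type*) [Field k] : Ideal (MvPolynomial (Fin 2) k) :=
  Ideal.span {(X 0 : MvPolynomial (Fin 2) k) ^ 2 + X 1 ^ 2,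
    (X 1 : MvPolynomial (Fin 2) k) ^ 2 * (X 1 - X 0)}

/-- Candidate basis monomials. -/
private def mv (k : Type*) [Field k] : Fin 6 → MvPolynomial (Fin 2) k :=
  ![1, X 0, X 1, X 0 ^ 2, X 0 * X 1, X 0 ^ 2 * X 1]

private lemma mv0 : mv k 0 = monomial (dd 0 0) 1 := by
  rw [show mv k 0 = (1 : MvPolynomial (Fin 2) k) from rfl, ← Xst_eq_dd 0 0]; simp
private lemma mv1 : mv k 1 = monomial (dd 1 0) 1 := by
  rw [show mv k 1 = (X 0 : MvPolynomial (Fin 2) k) from rfl, ← Xst_eq_dd 1 0]; simp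
private lemma mv2 : mv k 2 = monomial (dd 0 1) 1 := by
  rw [show mv k 2 = (X 1 : MvPolynomial (Fin 2) k) from rfl, ← Xst_eq_dd 0 1]; simp
private lemma mv3 : mv k 3 = monomial (dd 2 0) 1 := by
  rw [show mv k 3 = (X 0 : MvPolynomial (Fin 2) k) ^ 2 from rfl, ← Xst_eq_dd 2 0]; simp
private lemma mv4 : mv k 4 = monomial (dd 1 1) 1 := by
  rw [show mv k 4 = (X 0 : MvPolynomial (Fin 2) k) * X 1 from rfl, ← Xst_eq_dd 1 1]; simp
private lemma mv5 : mv k 5 = monomial (dd 2 1) 1 := by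
  rw [show mv k 5 = (X 0 : MvPolynomial (Fin 2) k) ^ 2 * X 1 from rfl, ← Xst_eq_dd 2 1]; simp

private def lam : MvPolynomial (Fin 2) k →ₗ[k] (Fin 6 → k) :=
  LinearMap.pi fun j =>
    ![lcoeff k (dd 0 0), lcoeff k (dd 1 0), lcoeff k (dd 0 1),
      lcoeff k (dd 2 0) - lcoeff k (dd 0 2), lcoeff k (dd 1 1),
      lcoeff k (dd 3 0) - lcoeff k (dd 1 2) + lcoeff k (dd 2 1) - lcoeff k (dd 0 3)] j

private lemma lam0 (p : MvPolynomial (Fin 2) k) : lam p 0 = coeff (dd 0 0) p := rfl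
private lemma lam1 (p : MvPolynomial (Fin 2) k) : lam p 1 = coeff (dd 1 0) p := rfl
private lemma lam2 (p : MvPolynomial (Fin 2) k) : lam p 2 = coeff (dd 0 1) p := rfl
private lemma lam3 (p : MvPolynomial (Fin 2) k) :
    lam p 3 = coeff (dd 2 0) p - coeff (dd 0 2) p := rfl
private lemma lam4 (p : MvPolynomial (Fin 2) k) : lam p 4 = coeff (dd 1 1) p := rfl
private lemma lam5 (p : MvPolynomial (Fin 2) k) :
    lam p 5 = coeff (dd 3 0) p - coeff (dd 1 2) p + coeff (dd 2 1) p - coeff (dd 0 3) p := rfl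

private lemma lam_vanish (p : MvPolynomial (Fin 2) k) (hp : p ∈ Iid k) :
    lam p = 0 := by
  obtain ⟨u, v, huv⟩ := Ideal.mem_span_pair.mp hp
  have hrw : p = u * monomial (dd 2 0) 1 + u * monomial (dd 0 2) 1
      + v * monomial (dd 0 3) 1 - v * monomial (dd 1 2) 1 := by
    rw [← huv, ← Xst_eq_dd 2 0, ← Xst_eq_dd 0 2, ← Xst_eq_dd 0 3, ← Xst_eq_dd 1 2]; ring
  funext j
  fin_cases j <;>
    (simp [lam0, lam1, lam2, lam3, lam4, lam5, hrw, coeff_mul_dd, coeff_add, coeff_sub];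
      try ring)

private lemma mk_smul (c : k) (x : MvPolynomial (Fin 2) k) :
    Ideal.Quotient.mk (Iid k) (c • x) = c • Ideal.Quotient.mk (Iid k) x := by
  rw [← Ideal.Quotient.mkₐ_eq_mk k (Iid k)]
  exact map_smul (Ideal.Quotient.mkₐ k (Iid k)) c x

private lemma indep : LinearIndependent k
    (fun j => Ideal.Quotient.mk (Iid k) (mv k j)) := by
  rw [Fintype.linearIndependent_iff]
  intro g hg
  have hmem : (∑ i, g i • mv k i) ∈ Iid k := by
    rw [← Ideal.Quotient.eq_zero_iff_mem, map_sum]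
    simpa [mk_smul] using hg
  have h0 := lam_vanish _ hmem
  intro j
  fin_cases j
  · have := congrFun h0 0
    rw [lam0] at this
    simpa [Fin.sum_univ_six, mv0, mv1, mv2, mv3, mv4, mv5, coeff_smul, coeff_monomial, dd_eq_iff] using this
  · have := congrFun h0 1
    rw [lam1] at this
    simpa [Fin.sum_univ_six, mv0, mv1, mv2, mv3, mv4, mv5, coeff_smul, coeff_monomial, dd_eq_iff] using this
  · have := congrFun h0 2
    rw [lam2] at this
    simpa [Fin.sum_univ_six, mv0, mv1, mv2, mv3, mv4, mv5, coeff_smul, coeff_monomial, dd_eq_iff] using this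
  · have := congrFun h0 3
    rw [lam3] at this
    simpa [Fin.sum_univ_six, mv0, mv1, mv2, mv3, mv4, mv5, coeff_smul, coeff_monomial, dd_eq_iff] using this
  · have := congrFun h0 4
    rw [lam4] at this
    simpa [Fin.sum_univ_six, mv0, mv1, mv2, mv3, mv4, mv5, coeff_smul, coeff_monomial, dd_eq_iff] using this
  · have := congrFun h0 5
    rw [lam5] at this
    simpa [Fin.sum_univ_six, mv0, mv1, mv2, mv3, mv4, mv5, coeff_smul, coeff_monomial, dd_eq_iff] using this

private lemma hf_mem : ((X 0 : MvPolynomial (Fin 2) k) ^ 2 + X 1 ^ 2) ∈ Iid k :=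
  Ideal.subset_span (by simp)

private lemma h3_mem : ((X 0 : MvPolynomial (Fin 2) k) ^ 3 - X 0 ^ 2 * X 1) ∈ Iid k :=
  Ideal.mem_span_pair.mpr ⟨X 0 - X 1, 1, by ring⟩

private lemma hx4_mem (hchar : (2 : k) ≠ 0) : ((X 0 : MvPolynomial (Fin 2) k) ^ 4) ∈ Iid k := by
  have h2 : (C (2⁻¹ : k) : MvPolynomial (Fin 2) k) * C 2 = 1 := by
    rw [← C_mul, inv_mul_cancel₀ hchar, C_1]
  rw [map_ofNat] at h2
  refine Ideal.mem_span_pair.mpr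
    ⟨C (2⁻¹ : k) * (2 * X 0 ^ 2 - X 1 ^ 2), C (2⁻¹ : k) * (X 0 + X 1), ?_⟩
  linear_combination ((X 0 : MvPolynomial (Fin 2) k) ^ 4) * h2

private lemma hx3y_mem (hchar : (2 : k) ≠ 0) :
    ((X 0 : MvPolynomial (Fin 2) k) ^ 3 * X 1) ∈ Iid k := by
  have h : (X 0 : MvPolynomial (Fin 2) k) ^ 3 * X 1
      = X 1 * (X 0 ^ 3 - X 0 ^ 2 * X 1) + X 0 ^ 2 * (X 0 ^ 2 + X 1 ^ 2) - X 0 ^ 4 := by ring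
  rw [h]
  exact Ideal.sub_mem _
    (Ideal.add_mem _ (Ideal.mul_mem_left _ _ h3_mem) (Ideal.mul_mem_left _ _ hf_mem))
    (hx4_mem hchar)

private lemma mono_mem (hchar : (2 : k) ≠ 0) : ∀ b a : ℕ,
    Ideal.Quotient.mk (Iid k) (X 0 ^ a * X 1 ^ b) ∈
      Submodule.span k (Set.range fun j => Ideal.Quotient.mk (Iid k) (mv k j)) := by
  intro b
  induction b using Nat.strong_induction_on with
  | _ b ih =>
    match b with
    | 0 =>
      intro a
      match a with
      | 0 => exact Submodule.subset_span ⟨0, by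
          show Ideal.Quotient.mk (Iid k) (mv k 0) = _
          rw [show mv k 0 = (1 : MvPolynomial (Fin 2) k) from rfl]; congr 1; ring⟩
      | 1 => exact Submodule.subset_span ⟨1, by
          show Ideal.Quotient.mk (Iid k) (mv k 1) = _
          rw [show mv k 1 = (X 0 : MvPolynomial (Fin 2) k) from rfl]; congr 1; ring⟩
      | 2 => exact Submodule.subset_span ⟨3, by
          show Ideal.Quotient.mk (Iid k) (mv k 3) = _
          rw [show mv k 3 = (X 0 : MvPolynomial (Fin 2) k) ^ 2 from rfl]; congr 1; ring⟩
      | 3 =>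
        have h : Ideal.Quotient.mk (Iid k) (X 0 ^ 3 * X 1 ^ 0)
            = Ideal.Quotient.mk (Iid k) (X 0 ^ 2 * X 1) :=
          Ideal.Quotient.eq.mpr (by simpa using h3_mem)
        rw [h]
        exact Submodule.subset_span ⟨5, by
          show Ideal.Quotient.mk (Iid k) (mv k 5) = _
          rw [show mv k 5 = (X 0 : MvPolynomial (Fin 2) k) ^ 2 * X 1 from rfl]⟩
      | (a + 4) =>
        have h : Ideal.Quotient.mk (Iid k) (X 0 ^ (a + 4) * X 1 ^ 0) = 0 := by
          rw [Ideal.Quotient.eq_zero_iff_mem,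
            show (X 0 : MvPolynomial (Fin 2) k) ^ (a + 4) * X 1 ^ 0 = X 0 ^ a * X 0 ^ 4 by ring]
          exact Ideal.mul_mem_left _ _ (hx4_mem hchar)
        rw [h]; exact Submodule.zero_mem _
    | 1 =>
      intro a
      match a with
      | 0 => exact Submodule.subset_span ⟨2, by
          show Ideal.Quotient.mk (Iid k) (mv k 2) = _
          rw [show mv k 2 = (X 1 : MvPolynomial (Fin 2) k) from rfl]; congr 1; ring⟩
      | 1 => exact Submodule.subset_span ⟨4, by
          show Ideal.Quotient.mk (Iid k) (mv k 4) = _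
          rw [show mv k 4 = (X 0 : MvPolynomial (Fin 2) k) * X 1 from rfl]; congr 1; ring⟩
      | 2 => exact Submodule.subset_span ⟨5, by
          show Ideal.Quotient.mk (Iid k) (mv k 5) = _
          rw [show mv k 5 = (X 0 : MvPolynomial (Fin 2) k) ^ 2 * X 1 from rfl]; congr 1; ring⟩
      | (a + 3) =>
        have h : Ideal.Quotient.mk (Iid k) (X 0 ^ (a + 3) * X 1 ^ 1) = 0 := by
          rw [Ideal.Quotient.eq_zero_iff_mem,
            show (X 0 : MvPolynomial (Fin 2) k) ^ (a + 3) * X 1 ^ 1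
              = X 0 ^ a * (X 0 ^ 3 * X 1) by ring]
          exact Ideal.mul_mem_left _ _ (hx3y_mem hchar)
        rw [h]; exact Submodule.zero_mem _
    | (b + 2) =>
      intro a
      have hrel : Ideal.Quotient.mk (Iid k) (X 0 ^ a * X 1 ^ (b + 2))
          = Ideal.Quotient.mk (Iid k) (-(X 0 ^ (a + 2) * X 1 ^ b)) :=
        Ideal.Quotient.eq.mpr (by
          rw [show (X 0 : MvPolynomial (Fin 2) k) ^ a * X 1 ^ (b + 2)
              - -(X 0 ^ (a + 2) * X 1 ^ b) = (X 0 ^ a * X 1 ^ b) * (X 0 ^ 2 + X 1 ^ 2) by ring]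
          exact Ideal.mul_mem_left _ _ hf_mem)
      rw [hrel, map_neg]
      exact Submodule.neg_mem _ (ih b (by omega) (a + 2))

private lemma spans (hchar : (2 : k) ≠ 0) :
    ⊤ ≤ Submodule.span k (Set.range fun j => Ideal.Quotient.mk (Iid k) (mv k j)) := by
  rintro q -
  obtain ⟨p, rfl⟩ := Ideal.Quotient.mk_surjective q
  induction p using MvPolynomial.induction_on' with
  | monomial u a =>
    have h : (monomial u a : MvPolynomial (Fin 2) k) = a • (X 0 ^ (u 0) * X 1 ^ (u 1)) := by
      rw [Xst_eq_dd, smul_monomial, smul_eq_mul, mul_one, ← mono_decomp]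
    rw [h, mk_smul]
    exact Submodule.smul_mem _ _ (mono_mem hchar (u 1) (u 0))
  | add p q hp hq =>
    rw [map_add]
    exact Submodule.add_mem _ hp hq

end Stmt19Aux

/-- over a field of characteristic `≠ 2`, the quotient ring
`k[x,y]/(x²+y², y²(y−x))` is 6-dimensional over `k`, with basis the images of
`1, x, y, x², xy, x²y`. -/
theorem stmt_19 (k : Type*) [Field k] (hchar : (2 : k) ≠ 0) :
    ∃ b : Module.Basis (Fin 6) k
        (MvPolynomial (Fin 2) k ⧸
          Ideal.span {(X 0 : MvPolynomial (Fin 2) k) ^ 2 + X 1 ^ 2,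
            (X 1 : MvPolynomial (Fin 2) k) ^ 2 * (X 1 - X 0)}),
      ∀ j : Fin 6,
        b j = Ideal.Quotient.mk _
          (![1, X 0, X 1, X 0 ^ 2, X 0 * X 1, X 0 ^ 2 * X 1] j) := by
  refine ⟨Module.Basis.mk (v := fun j => Ideal.Quotient.mk (Iid k) (mv k j)) indep (spans hchar),
    fun j => ?_⟩
  exact Module.Basis.mk_apply indep (spans hchar) j
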